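/- Let 𝒳 be a linearly ordered set, let X and X' be swap-neighboring finite multisets over 𝒳 of size n, let α > 0 and t ∈ ℝ. Suppose r̂_min, r̂_max : 𝒳 → ℝ satisfy r̂_min(x) ≤ r̂_max(x), |r̂_min(x) − r_min(X, x)| ≤ 2αn and |r̂_max(x) − r_max(X, x)| ≤ 2αn for all x ∈ 𝒳, and likewise r̂'_min, r̂'_max : 𝒳 → ℝ satisfy the analogous three conditions with respect to X'. Define u(x) = −d(t, [r̂_min(x), r̂_max(x)]) and u'(x) = −d(t, [r̂'_min(x), r̂'_max(x)]). Then |u(x) − u'(x)| ≤ 4αn + 2 for every x ∈ 𝒳. -/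
import Mathlib


/-- `rmin X x` is the number of elements of the multiset `X` strictly less than `x`. -/
def rmin {𝒳 : Type*} [LinearOrder 𝒳] (X : Multiset 𝒳) (x : 𝒳) : ℕ :=
  (X.filter (fun y => y < x)).card

/-- `rmax X x` is the number of elements of the multiset `X` at most `x`. -/
def rmax {𝒳 : Type*} [LinearOrder 𝒳] (X : Multiset 𝒳) (x : 𝒳) : ℕ :=
  (X.filter (fun y => y ≤ x)).card

/-- `X'` is obtained from `X` by removing one element and inserting one element. -/
def SwapNeighbor {𝒳 : Type*} [DecidableEq 𝒳] (X X' : Multiset 𝒳) : Prop :=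
  ∃ a b, a ∈ X ∧ X' = b ::ₘ X.erase a

lemma filter_card_swap {𝒳 : Type*} [LinearOrder 𝒳] (X X' : Multiset 𝒳)
    (hnb : SwapNeighbor X X') (p : 𝒳 → Prop) [DecidablePred p] :
    |((X.filter p).card : ℝ) - ((X'.filter p).card : ℝ)| ≤ 1 := by
  obtain ⟨a, b, ha, rfl⟩ := hnb
  have h1 : (X.filter p).card = ((X.erase a).filter p).card + (if p a then 1 else 0) := by
    conv_lhs => rw [← Multiset.cons_erase ha]
    rw [Multiset.filter_cons, Multiset.card_add]
    split_ifs <;> simp [add_comm]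
  have h2 : (((b ::ₘ X.erase a)).filter p).card
      = ((X.erase a).filter p).card + (if p b then 1 else 0) := by
    rw [Multiset.filter_cons, Multiset.card_add]
    split_ifs <;> simp [add_comm]
  rw [h1, h2]
  push_cast
  split_ifs <;> norm_num

lemma infDist_Icc_eq (a b t : ℝ) (hab : a ≤ b) :
    Metric.infDist t (Set.Icc a b) = dist t (max a (min b t)) := by
  set c := max a (min b t) with hc
  have hcmem : c ∈ Set.Icc a b := by
    constructor
    · exact le_max_left _ _
    · exact max_le hab (min_le_left _ _)
  refine le_antisymm (Metric.infDist_le_dist_of_mem hcmem) ?_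
  rw [Metric.infDist_eq_iInf]
  haveI : Nonempty ↑(Set.Icc a b) := (Set.nonempty_Icc.mpr hab).to_subtype
  apply le_ciInf
  rintro ⟨y, hy⟩
  simp only
  rw [Real.dist_eq, Real.dist_eq]
  rcases le_total t a with h | h
  · have hmin : min b t = t := min_eq_right (h.trans hab)
    have hcval : c = a := by rw [hc, hmin, max_eq_left h]
    rw [hcval, abs_of_nonpos (by linarith), abs_of_nonpos (by linarith [hy.1])]
    linarith [hy.1]
  · rcases le_total b t with h' | h'
    · have hcval : c = b := by rw [hc, min_eq_left h', max_eq_right hab]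
      rw [hcval, abs_of_nonneg (by linarith), abs_of_nonneg (by linarith [hy.2])]
      linarith [hy.2]
    · have hcval : c = t := by rw [hc, min_eq_right h', max_eq_right h]
      rw [hcval]
      simp [abs_nonneg]

theorem stmt3 {𝒳 : Type*} [LinearOrder 𝒳] (X X' : Multiset 𝒳) (n : ℕ)
    (hX : X.card = n) (hX' : X'.card = n) (hnb : SwapNeighbor X X')
    (α t : ℝ) (hα : 0 < α)
    (rhmin rhmax rhmin' rhmax' : 𝒳 → ℝ)
    (h1 : ∀ x, rhmin x ≤ rhmax x)
    (h2 : ∀ x, |rhmin x - (rmin X x : ℝ)| ≤ 2 * α * n)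
    (h3 : ∀ x, |rhmax x - (rmax X x : ℝ)| ≤ 2 * α * n)
    (h1' : ∀ x, rhmin' x ≤ rhmax' x)
    (h2' : ∀ x, |rhmin' x - (rmin X' x : ℝ)| ≤ 2 * α * n)
    (h3' : ∀ x, |rhmax' x - (rmax X' x : ℝ)| ≤ 2 * α * n)
    (x : 𝒳) :
    |(-(Metric.infDist t (Set.Icc (rhmin x) (rhmax x)))) -
      (-(Metric.infDist t (Set.Icc (rhmin' x) (rhmax' x))))| ≤ 4 * α * n + 2 := by
  have hrmin : |((rmin X x : ℝ)) - (rmin X' x : ℝ)| ≤ 1 :=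
    filter_card_swap X X' hnb (fun y => y < x)
  have hrmax : |((rmax X x : ℝ)) - (rmax X' x : ℝ)| ≤ 1 :=
    filter_card_swap X X' hnb (fun y => y ≤ x)
  have hA : |rhmin x - rhmin' x| ≤ 4 * α * n + 1 := by
    have := h2 x; have := h2' x
    have habs := abs_sub_abs_le_abs_sub (rhmin x - rhmin' x) 0
    calc |rhmin x - rhmin' x|
        = |(rhmin x - (rmin X x : ℝ)) + ((rmin X x : ℝ) - (rmin X' x : ℝ))
            + ((rmin X' x : ℝ) - rhmin' x)| := by ring_nf
      _ ≤ |rhmin x - (rmin X x : ℝ)| + |(rmin X x : ℝ) - (rmin X' x : ℝ)|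
            + |(rmin X' x : ℝ) - rhmin' x| := abs_add_three _ _ _
      _ ≤ 2 * α * n + 1 + 2 * α * n := by
          have e := h2' x
          rw [abs_sub_comm] at e
          exact add_le_add (add_le_add (h2 x) hrmin) e
      _ = 4 * α * n + 1 := by ring
  have hB : |rhmax x - rhmax' x| ≤ 4 * α * n + 1 := by
    calc |rhmax x - rhmax' x|
        = |(rhmax x - (rmax X x : ℝ)) + ((rmax X x : ℝ) - (rmax X' x : ℝ))
            + ((rmax X' x : ℝ) - rhmax' x)| := by ring_nf
      _ ≤ |rhmax x - (rmax X x : ℝ)| + |(rmax X x : ℝ) - (rmax X' x : ℝ)|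
            + |(rmax X' x : ℝ) - rhmax' x| := abs_add_three _ _ _
      _ ≤ 2 * α * n + 1 + 2 * α * n := by
          have e := h3' x
          rw [abs_sub_comm] at e
          exact add_le_add (add_le_add (h3 x) hrmax) e
      _ = 4 * α * n + 1 := by ring
  set c := max (rhmin x) (min (rhmax x) t) with hc
  set c' := max (rhmin' x) (min (rhmax' x) t) with hc'
  have hcc' : |c - c'| ≤ 4 * α * n + 1 := by
    calc |c - c'| ≤ max |rhmin x - rhmin' x| |min (rhmax x) t - min (rhmax' x) t| :=
          abs_max_sub_max_le_max _ _ _ _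
      _ ≤ 4 * α * n + 1 := by
          apply max_le hA
          calc |min (rhmax x) t - min (rhmax' x) t|
              ≤ max |rhmax x - rhmax' x| |t - t| := abs_min_sub_min_le_max _ _ _ _
            _ ≤ 4 * α * n + 1 := by simpa using hB
  rw [infDist_Icc_eq _ _ _ (h1 x), infDist_Icc_eq _ _ _ (h1' x), ← hc, ← hc']
  have hd : |dist t c - dist t c'| ≤ |c - c'| := by
    have := abs_dist_sub_le c c' t
    rw [dist_comm c t, dist_comm c' t] at this
    simpa [Real.dist_eq] using this
  have : |(-(dist t c)) - (-(dist t c'))| = |dist t c - dist t c'| := by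
    rw [← abs_neg]; ring_nf
  rw [this]
  linarith [hd.trans hcc']
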